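/- Let u : ℝ → ℝ be a polynomial of degree at most 2m, let s > 0, and let g(y) = (1/(√(2π)s)) exp(-y²/(2s²)). Then ∫_ℝ u(y) g(x−y) dy = ∑_{k=0}^{m} u^{(2k)}(x) s^{2k} / (2^k k!) for every x ∈ ℝ. -/

import Mathlib

open MeasureTheory Real Polynomial Filter

lemma integrable_pow_mul_gauss {b : ℝ} (hb : 0 < b) (n : ℕ) :
    Integrable fun z : ℝ => z ^ n * Real.exp (-b * z ^ 2) := by
  have h : (-1 : ℝ) < (n : ℝ) :=
    lt_of_lt_of_le (by norm_num) (Nat.cast_nonneg n)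
  simpa [Real.rpow_natCast] using integrable_rpow_mul_exp_neg_mul_sq hb h

lemma integral_odd_pow_gauss {b : ℝ} (n : ℕ) :
    (∫ z : ℝ, z ^ (2 * n + 1) * Real.exp (-b * z ^ 2)) = 0 := by
  have h := integral_neg_eq_self
    (fun z : ℝ => z ^ (2 * n + 1) * Real.exp (-b * z ^ 2)) (volume : Measure ℝ)
  have h2 : (∫ z : ℝ, (-z) ^ (2 * n + 1) * Real.exp (-b * (-z) ^ 2))
      = - ∫ z : ℝ, z ^ (2 * n + 1) * Real.exp (-b * z ^ 2) := by
    rw [← integral_neg]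
    congr 1 with z
    rw [Odd.neg_pow ⟨n, by ring⟩, neg_sq]
    ring
  rw [h2] at h
  linarith

lemma gauss_moment_rec {b : ℝ} (hb : 0 < b) (n : ℕ) :
    (∫ z : ℝ, z ^ (n + 2) * Real.exp (-b * z ^ 2))
      = ((n : ℝ) + 1) / (2 * b) * ∫ z : ℝ, z ^ n * Real.exp (-b * z ^ 2) := by
  have hu : ∀ z : ℝ, HasDerivAt (fun z : ℝ => z ^ (n + 1))
      (((n : ℝ) + 1) * z ^ n) z := fun z => by
    simpa using hasDerivAt_pow (n + 1) z
  have hv : ∀ z : ℝ, HasDerivAt (fun z : ℝ => -Real.exp (-b * z ^ 2) / (2 * b))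
      (z * Real.exp (-b * z ^ 2)) z := by
    intro z
    have h1 : HasDerivAt (fun z : ℝ => -b * z ^ 2) (-b * (2 * z)) z := by
      simpa using (hasDerivAt_pow 2 z).const_mul (-b)
    have h2 := (h1.exp.neg).div_const (2 * b)
    refine h2.congr_deriv ?_
    rw [div_eq_iff (by positivity)]
    ring
  have huv' : Integrable ((fun z : ℝ => z ^ (n + 1)) *
      (fun z : ℝ => z * Real.exp (-b * z ^ 2))) := by
    have : ((fun z : ℝ => z ^ (n + 1)) * (fun z : ℝ => z * Real.exp (-b * z ^ 2)))
        = fun z : ℝ => z ^ (n + 2) * Real.exp (-b * z ^ 2) := by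
      funext z; simp [Pi.mul_apply]; ring
    rw [this]; exact integrable_pow_mul_gauss hb (n + 2)
  have hu'v : Integrable ((fun z : ℝ => ((n : ℝ) + 1) * z ^ n) *
      (fun z : ℝ => -Real.exp (-b * z ^ 2) / (2 * b))) := by
    have : ((fun z : ℝ => ((n : ℝ) + 1) * z ^ n) *
        (fun z : ℝ => -Real.exp (-b * z ^ 2) / (2 * b)))
        = fun z : ℝ => (-((n : ℝ) + 1) / (2 * b)) * (z ^ n * Real.exp (-b * z ^ 2)) := by
      funext z; simp [Pi.mul_apply]; ring
    rw [this]; exact (integrable_pow_mul_gauss hb n).const_mul _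
  have huv : Integrable ((fun z : ℝ => z ^ (n + 1)) *
      (fun z : ℝ => -Real.exp (-b * z ^ 2) / (2 * b))) := by
    have : ((fun z : ℝ => z ^ (n + 1)) * (fun z : ℝ => -Real.exp (-b * z ^ 2) / (2 * b)))
        = fun z : ℝ => (-1 / (2 * b)) * (z ^ (n + 1) * Real.exp (-b * z ^ 2)) := by
      funext z; simp [Pi.mul_apply]; ring
    rw [this]; exact (integrable_pow_mul_gauss hb (n + 1)).const_mul _
  have key := MeasureTheory.integral_mul_deriv_eq_deriv_mul_of_integrable
    (fun z _ => hu z) (fun z _ => hv z) huv' hu'v huv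
  have hL : (∫ z : ℝ, z ^ (n + 1) * (z * Real.exp (-b * z ^ 2)))
      = ∫ z : ℝ, z ^ (n + 2) * Real.exp (-b * z ^ 2) := by
    congr 1 with z; ring
  have hR : (∫ z : ℝ, ((n : ℝ) + 1) * z ^ n * (-Real.exp (-b * z ^ 2) / (2 * b)))
      = (-((n : ℝ) + 1) / (2 * b)) * ∫ z : ℝ, z ^ n * Real.exp (-b * z ^ 2) := by
    rw [← integral_const_mul]
    congr 1 with z; ring
  rw [hL, hR] at key
  rw [key]; ring

lemma gauss_moment_even {b : ℝ} (hb : 0 < b) (k : ℕ) :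
    (∫ z : ℝ, z ^ (2 * k) * Real.exp (-b * z ^ 2))
      = Real.sqrt (π / b) * (2 * k).factorial / (k.factorial * (4 * b) ^ k) := by
  induction k with
  | zero => simpa using integral_gaussian b
  | succ k ih =>
    have h1 : 2 * (k + 1) = 2 * k + 2 := by ring
    rw [h1, gauss_moment_rec hb (2 * k), ih]
    have hb' : (2 : ℝ) * b ≠ 0 := by positivity
    have h2 : (((2 * k + 2).factorial : ℕ) : ℝ)
        = (2 * (k : ℝ) + 2) * (2 * (k : ℝ) + 1) * ((2 * k).factorial : ℝ) := by
      rw [show 2 * k + 2 = (2 * k + 1) + 1 by ring, Nat.factorial_succ, Nat.factorial_succ]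
      push_cast; ring
    have h3 : ((k + 1).factorial : ℝ) = ((k : ℝ) + 1) * (k.factorial : ℝ) := by
      rw [Nat.factorial_succ]; push_cast; ring
    rw [h2, h3]
    have hk : (k.factorial : ℝ) ≠ 0 := Nat.cast_ne_zero.2 k.factorial_ne_zero
    push_cast
    field_simp
    ring

lemma sum_range_even_eq (f : ℕ → ℝ) (h : ∀ k, f (2 * k + 1) = 0) (m : ℕ) :
    ∑ n ∈ Finset.range (2 * m + 1), f n = ∑ k ∈ Finset.range (m + 1), f (2 * k) := by
  induction m with
  | zero => simp
  | succ m ih =>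
    rw [show 2 * (m + 1) + 1 = (2 * m + 1) + 1 + 1 by ring, Finset.sum_range_succ,
      Finset.sum_range_succ, ih, h m,
      show 2 * m + 1 + 1 = 2 * (m + 1) by ring]
    conv_rhs => rw [Finset.sum_range_succ]
    ring

/-- Exact moment expansion of the convolution of a polynomial of degree at most `2m`
with a centered Gaussian of standard deviation `s`. -/
theorem polynomial_gaussian_convolution (u : Polynomial ℝ) (m : ℕ)
    (hdeg : u.natDegree ≤ 2 * m) (s : ℝ) (hs : 0 < s) (x : ℝ) :
    (∫ y : ℝ, u.eval y * ((1 / (Real.sqrt (2 * Real.pi) * s)) *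
        Real.exp (-(x - y) ^ 2 / (2 * s ^ 2)))) =
      ∑ k ∈ Finset.range (m + 1),
        ((Polynomial.derivative^[2 * k] u).eval x) * s ^ (2 * k) /
          (2 ^ k * Nat.factorial k) := by
  set C : ℝ := 1 / (Real.sqrt (2 * Real.pi) * s) with hC_def
  set b : ℝ := 1 / (2 * s ^ 2) with hb_def
  have hb : 0 < b := by positivity
  have hs' : s ≠ 0 := ne_of_gt hs
  -- change of variables y ↦ x - z
  have step1 : (∫ y : ℝ, u.eval y * (C * Real.exp (-(x - y) ^ 2 / (2 * s ^ 2))))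
      = ∫ z : ℝ, u.eval (x - z) * (C * Real.exp (-b * z ^ 2)) := by
    rw [← integral_sub_left_eq_self
      (fun y : ℝ => u.eval y * (C * Real.exp (-(x - y) ^ 2 / (2 * s ^ 2))))
      (volume : Measure ℝ) x]
    congr 1 with z
    have h1 : x - (x - z) = z := by ring
    rw [h1]
    have h2 : -z ^ 2 / (2 * s ^ 2) = -b * z ^ 2 := by
      rw [hb_def]; field_simp
    rw [h2]
  -- Taylor coefficients
  have hcoeff : ∀ n : ℕ, (Polynomial.taylor x u).coeff n
      = (Polynomial.derivative^[n] u).eval x / n.factorial := by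
    intro n
    have h2 : Polynomial.derivative^[n] u = n.factorial • Polynomial.hasseDeriv n u := by
      rw [← Polynomial.factorial_smul_hasseDeriv]
      rfl
    rw [Polynomial.taylor_coeff, h2]
    have hne : ((n.factorial : ℕ) : ℝ) ≠ 0 := Nat.cast_ne_zero.2 n.factorial_ne_zero
    simp [Polynomial.eval_smul, nsmul_eq_mul]
    field_simp
  -- Taylor expansion of u at x
  have hexp : ∀ z : ℝ, u.eval (x - z)
      = ∑ n ∈ Finset.range (2 * m + 1),
          ((Polynomial.derivative^[n] u).eval x / n.factorial) * (-z) ^ n := by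
    intro z
    have h1 : u.eval (x - z) = (Polynomial.taylor x u).eval (-z) := by
      rw [Polynomial.taylor_eval]
      congr 1
      ring
    have hlt : (Polynomial.taylor x u).natDegree < 2 * m + 1 := by
      rw [Polynomial.natDegree_taylor]; exact Nat.lt_succ_of_le hdeg
    rw [h1, Polynomial.eval_eq_sum_range' hlt (-z)]
    exact Finset.sum_congr rfl fun n _ => by rw [hcoeff]
  rw [step1]
  -- interchange integral and finite sum
  have step2 : (∫ z : ℝ, u.eval (x - z) * (C * Real.exp (-b * z ^ 2)))
      = ∑ n ∈ Finset.range (2 * m + 1),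
          (((Polynomial.derivative^[n] u).eval x / n.factorial) * (-1) ^ n * C)
            * ∫ z : ℝ, z ^ n * Real.exp (-b * z ^ 2) := by
    have heq : (fun z : ℝ => u.eval (x - z) * (C * Real.exp (-b * z ^ 2)))
        = fun z : ℝ => ∑ n ∈ Finset.range (2 * m + 1),
            (((Polynomial.derivative^[n] u).eval x / n.factorial) * (-1) ^ n * C)
              * (z ^ n * Real.exp (-b * z ^ 2)) := by
      funext z
      rw [hexp z, Finset.sum_mul]
      refine Finset.sum_congr rfl fun n _ => ?_
      rw [neg_pow]
      ring
    rw [heq, integral_finset_sum _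
      (fun n _ => (integrable_pow_mul_gauss hb n).const_mul _)]
    exact Finset.sum_congr rfl fun n _ => (integral_const_mul _ _)
  rw [step2]
  -- kill odd terms and evaluate even ones
  have hodd : ∀ k : ℕ,
      (((Polynomial.derivative^[2 * k + 1] u).eval x / (2 * k + 1).factorial)
          * (-1) ^ (2 * k + 1) * C)
        * (∫ z : ℝ, z ^ (2 * k + 1) * Real.exp (-b * z ^ 2)) = 0 := by
    intro k
    rw [integral_odd_pow_gauss, mul_zero]
  rw [sum_range_even_eq _ hodd m]
  refine Finset.sum_congr rfl fun k _ => ?_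
  rw [gauss_moment_even hb k]
  have hm1 : ((-1 : ℝ)) ^ (2 * k) = 1 := by
    rw [pow_mul]; norm_num
  have hCb : C * Real.sqrt (π / b) = 1 := by
    rw [hC_def, hb_def]
    have h1 : π / (1 / (2 * s ^ 2)) = (2 * π) * s ^ 2 := by
      field_simp
    rw [h1, Real.sqrt_mul (by positivity : (0:ℝ) ≤ 2 * π) (s ^ 2), Real.sqrt_sq hs.le]
    have h2 : Real.sqrt (2 * π) ≠ 0 := by positivity
    field_simp
  have h4b : (4 * b) ^ k * s ^ (2 * k) = 2 ^ k := by
    rw [hb_def, pow_mul, ← mul_pow]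
    congr 1
    field_simp
    ring
  have hfac2 : (((2 * k).factorial : ℕ) : ℝ) ≠ 0 := Nat.cast_ne_zero.2 (2 * k).factorial_ne_zero
  have hfac : ((k.factorial : ℕ) : ℝ) ≠ 0 := Nat.cast_ne_zero.2 k.factorial_ne_zero
  have hbk : ((4 : ℝ) * b) ^ k ≠ 0 := by positivity
  rw [hm1]
  have key : ((Polynomial.derivative^[2 * k] u).eval x / ((2 * k).factorial : ℝ)) * 1 * C
        * (Real.sqrt (π / b) * ((2 * k).factorial : ℝ) / ((k.factorial : ℝ) * (4 * b) ^ k))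
      = (Polynomial.derivative^[2 * k] u).eval x * (C * Real.sqrt (π / b))
        / ((k.factorial : ℝ) * (4 * b) ^ k) := by
    field_simp
  rw [key, hCb, mul_one]
  rw [div_eq_div_iff (by positivity) (by positivity)]
  calc (Polynomial.derivative^[2 * k] u).eval x * (2 ^ k * (k.factorial : ℝ))
      = (Polynomial.derivative^[2 * k] u).eval x * ((4 * b) ^ k * s ^ (2 * k)) * (k.factorial : ℝ) := by
        rw [h4b]; ring
    _ = (Polynomial.derivative^[2 * k] u).eval x * s ^ (2 * k) * ((k.factorial : ℝ) * (4 * b) ^ k) := by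
        ring
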